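/- arXiv:1312.1837 — 5 statements merged into one kernel-verified Lean document; each statement's English description precedes it below -/
import Mathlib

section
/- Let A = (F^t[G], λ) be a twisted group algebra with a G-graded involution θ, so that θ(x^σ) = (−1)^{q(σ)} x^σ for a map q : G → F₂. Then the map β_q(σ,τ) := q(σ) + q(τ) − q(σ+τ) satisfies (−1)^{β_q(σ,τ)} = λ(σ,τ)λ(τ,σ)^{-1} for all σ, τ ∈ G, and β_q is a group bihomomorphism G × G → F₂; hence q is a quadratic map. -/
private lemma neg_one_pow_val_add {F : Type*} [Field F] (a b : ZMod 2) :
    (-1 : F) ^ ((a + b).val) = (-1 : F) ^ a.val * (-1 : F) ^ b.val := by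
  rw [ZMod.val_add, ← pow_add]
  exact (neg_one_pow_eq_pow_mod_two (n := a.val + b.val)).symm

private lemma neg_one_pow_val_inj {F : Type*} [Field F] [CharZero F] {a b : ZMod 2}
    (h : (-1 : F) ^ a.val = (-1 : F) ^ b.val) : a = b := by
  have hz : ∀ x : ZMod 2, x = 0 ∨ x = 1 := by decide
  rcases hz a with ha | ha <;> rcases hz b with hb | hb <;> subst ha <;> subst hb <;>
    first
    | rfl
    | (exfalso; norm_num [show ((1:ZMod 2)).val = 1 from rfl] at h)

/-- Let `(F^t[G], λ)` be a twisted group algebra with a graded involution `θ`,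
`θ(x^σ) = (−1)^{q(σ)} x^σ` for a map `q : G → F₂`.  The antiautomorphism property of `θ`
on basis elements reads `(−1)^{q(σ+τ)} λ(σ,τ) = (−1)^{q(σ)}(−1)^{q(τ)} λ(τ,σ)`.
Then `β_q(σ,τ) := q(σ)+q(τ)−q(σ+τ)` satisfies `(−1)^{β_q(σ,τ)} = λ(σ,τ)λ(τ,σ)⁻¹`
and `β_q` is biadditive; hence `q` is a quadratic map. -/
theorem stmt7 {G F : Type*} [AddCommGroup G] [Field F] [CharZero F]
    (l : G → G → Fˣ)
    (hl : ∀ σ τ μ : G, l (σ + τ) μ * l σ τ = l σ (τ + μ) * l τ μ)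
    (q : G → ZMod 2)
    (hθ : ∀ σ τ : G, ((-1 : F) ^ (q (σ + τ)).val) * (l σ τ : F)
        = ((-1 : F) ^ (q σ).val * (-1 : F) ^ (q τ).val) * (l τ σ : F)) :
    (∀ σ τ : G, (-1 : F) ^ ((q σ + q τ - q (σ + τ)).val)
        = (l σ τ : F) * ((l τ σ : F))⁻¹) ∧
    (∀ σ σ' τ : G, (q (σ + σ') + q τ - q (σ + σ' + τ))
        = (q σ + q τ - q (σ + τ)) + (q σ' + q τ - q (σ' + τ))) ∧
    (∀ σ τ τ' : G, (q σ + q (τ + τ') - q (σ + (τ + τ')))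
        = (q σ + q τ - q (σ + τ)) + (q σ + q τ' - q (σ + τ'))) := by
  have hne : ∀ σ τ : G, (l σ τ : F) ≠ 0 := fun σ τ => Units.ne_zero _
  have hsign : ∀ σ τ : G, (-1 : F) ^ ((q σ + q τ - q (σ + τ)).val)
      = (-1 : F) ^ (q σ).val * (-1 : F) ^ (q τ).val * (-1 : F) ^ (q (σ + τ)).val := by
    intro σ τ
    rw [CharTwo.sub_eq_add, neg_one_pow_val_add, neg_one_pow_val_add]
  -- part 1
  have part1 : ∀ σ τ : G, (-1 : F) ^ ((q σ + q τ - q (σ + τ)).val)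
      = (l σ τ : F) * ((l τ σ : F))⁻¹ := by
    intro σ τ
    have h := hθ σ τ
    have hsq : (-1 : F) ^ (q (σ + τ)).val * (-1 : F) ^ (q (σ + τ)).val = 1 := by
      rw [← mul_pow]; norm_num
    rw [hsign, eq_comm, mul_inv_eq_iff_eq_mul₀ (hne τ σ)]
    linear_combination ((-1 : F) ^ (q (σ + τ)).val) * h - (l σ τ : F) * hsq
  -- key multiplicative identity from the cocycle condition
  have hid : ∀ σ σ' τ : G,
      (l (σ + σ') τ : F) * (l τ σ : F) * (l τ σ' : F)
        = (l σ τ : F) * (l σ' τ : F) * (l τ (σ + σ') : F) := by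
    intro σ σ' τ
    have e1 : (l (σ + σ') τ : F) * (l σ σ' : F) = (l σ (σ' + τ) : F) * (l σ' τ : F) := by
      exact_mod_cast congrArg Units.val (hl σ σ' τ)
    have e3 : (l (τ + σ) σ' : F) * (l τ σ : F) = (l τ (σ + σ') : F) * (l σ σ' : F) := by
      exact_mod_cast congrArg Units.val (hl τ σ σ')
    have e2 : (l (σ + τ) σ' : F) * (l σ τ : F) = (l σ (τ + σ') : F) * (l τ σ' : F) := by
      exact_mod_cast congrArg Units.val (hl σ τ σ')
    rw [add_comm σ τ, add_comm τ σ'] at e2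
    apply mul_left_cancel₀ (hne σ σ')
    linear_combination ((l τ σ : F) * (l τ σ' : F)) * e1
      + ((l σ τ : F) * (l σ' τ : F)) * e3
      - ((l σ' τ : F) * (l τ σ : F)) * e2
  -- biadditivity in the first variable
  have part2 : ∀ σ σ' τ : G, (q (σ + σ') + q τ - q (σ + σ' + τ))
      = (q σ + q τ - q (σ + τ)) + (q σ' + q τ - q (σ' + τ)) := by
    intro σ σ' τ
    apply neg_one_pow_val_inj (F := F)
    rw [part1, neg_one_pow_val_add, part1, part1]
    field_simp
    linear_combination hid σ σ' τ

  refine ⟨part1, part2, ?_⟩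
  -- biadditivity in the second variable, by symmetry of β
  have βsymm : ∀ σ τ : G, q σ + q τ - q (σ + τ) = q τ + q σ - q (τ + σ) := by
    intro σ τ; rw [add_comm σ τ, add_comm (q σ)]
  intro σ τ τ'
  calc q σ + q (τ + τ') - q (σ + (τ + τ'))
      = q (τ + τ') + q σ - q (τ + τ' + σ) := βsymm σ (τ + τ')
    _ = (q τ + q σ - q (τ + σ)) + (q τ' + q σ - q (τ' + σ)) := part2 τ τ' σ
    _ = (q σ + q τ - q (σ + τ)) + (q σ + q τ' - q (σ + τ')) := by
        rw [← βsymm σ τ, ← βsymm σ τ']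
end

section
/- Let G be a torsion-free abelian group and A an associative unital algebra over a field F of characteristic zero such that the Jordan algebra A⁺ (with product a∘b = (ab+ba)/2) is a Jordan G-torus. Then A itself is G-graded with the same homogeneous components, i.e., A^σ A^τ ⊆ A^{σ+τ} for all σ, τ ∈ G; hence A is an associative G-torus. -/
lemma exists_good_functional {ι : Type*} (Δ : Finset (ι →₀ ℤ)) :
    ∃ r : (ι →₀ ℤ) →ₗ[ℤ] ℚ, ∀ v ∈ Δ, v ≠ 0 → r v ≠ 0 := by
  classical
  induction Δ using Finset.induction_on with
  | empty => exact ⟨0, by simp⟩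
  | @insert v Δ hvΔ IH =>
    obtain ⟨r, hr⟩ := IH
    by_cases hv0 : v = 0
    · refine ⟨r, ?_⟩
      intro e he hne
      rcases Finset.mem_insert.1 he with h | h
      · exact absurd (h.trans hv0) hne
      · exact hr e h hne
    · obtain ⟨i₀, hi₀⟩ := Finsupp.ne_iff.1 hv0
      simp only [Finsupp.coe_zero, Pi.zero_apply] at hi₀
      let q : (ι →₀ ℤ) →ₗ[ℤ] ℚ :=
        { toFun := fun f => ((f i₀ : ℤ) : ℚ)
          map_add' := by intro f g; simp
          map_smul' := by intro c f; simp }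
      have hqv : q v ≠ 0 := by
        simpa [q] using (Int.cast_ne_zero (α := ℚ)).2 hi₀
      obtain ⟨t, ht⟩ := Infinite.exists_notMem_finset
        ((insert v Δ).image (fun e => - r e / q e))
      refine ⟨r + t • q, ?_⟩
      intro e he hne h0
      simp only [LinearMap.add_apply, LinearMap.smul_apply, smul_eq_mul] at h0
      by_cases hqe : q e = 0
      · rw [hqe, mul_zero, add_zero] at h0
        rcases Finset.mem_insert.1 he with h | h
        · subst h; exact hqv hqe
        · exact hr e h hne h0
      · apply ht
        refine Finset.mem_image.2 ⟨e, he, ?_⟩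
        field_simp
        linarith [h0]

lemma exists_sep_functional {G : Type*} [AddCommGroup G] (hG : ∀ g : G, g ≠ 0 → ¬IsOfFinAddOrder g)
    (D : Finset G) :
    ∃ Ψ : G → ℚ,
      (∀ g h : G, g ∈ Submodule.span ℤ (D : Set G) → h ∈ Submodule.span ℤ (D : Set G) →
        Ψ (g + h) = Ψ g + Ψ h) ∧
      (∀ g ∈ D, ∀ h ∈ D, Ψ g = Ψ h → g = h) := by
  classical
  haveI : IsAddTorsionFree G := IsAddTorsionFree.of_not_isOfFinAddOrder hG
  set H := Submodule.span ℤ (D : Set G) with hH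
  haveI : Module.Finite ℤ H := Module.Finite.span_of_finite ℤ D.finite_toSet
  haveI : Module.Free ℤ H := Module.free_of_finite_type_torsion_free'
  let b := Module.Free.chooseBasis ℤ H
  let lift : ∀ g ∈ D, H := fun g hg => ⟨g, Submodule.subset_span hg⟩
  let Δ : Finset (Module.Free.ChooseBasisIndex ℤ H →₀ ℤ) :=
    ((D ×ˢ D).attach).image (fun p =>
      b.repr (⟨p.1.1, Submodule.subset_span (Finset.mem_product.1 p.2).1⟩
            - ⟨p.1.2, Submodule.subset_span (Finset.mem_product.1 p.2).2⟩))
  obtain ⟨r, hr⟩ := exists_good_functional Δ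
  let φ : H →ₗ[ℤ] ℚ := r ∘ₗ (b.repr : H ≃ₗ[ℤ] _).toLinearMap
  refine ⟨fun g => if hg : g ∈ H then φ ⟨g, hg⟩ else 0, ?_, ?_⟩
  · intro g h hg hh
    simp only []
    rw [dif_pos hg, dif_pos hh, dif_pos (add_mem hg hh)]
    have : (⟨g + h, add_mem hg hh⟩ : H) = ⟨g, hg⟩ + ⟨h, hh⟩ := rfl
    rw [this, map_add]
  · intro g hg h hh heq
    by_contra hne
    have hgH : g ∈ H := Submodule.subset_span hg
    have hhH : h ∈ H := Submodule.subset_span hh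
    simp only [] at heq
    rw [dif_pos hgH, dif_pos hhH] at heq
    set v := b.repr ((⟨g, hgH⟩ : H) - ⟨h, hhH⟩) with hv
    have hvΔ : v ∈ Δ := by
      refine Finset.mem_image.2 ⟨⟨(g, h), Finset.mem_product.2 ⟨hg, hh⟩⟩, Finset.mem_attach _ _, rfl⟩
    have hvne : v ≠ 0 := by
      intro h0
      rw [hv] at h0
      have := (LinearEquiv.map_eq_zero_iff _).1 h0
      rw [sub_eq_zero] at this
      exact hne (congrArg Subtype.val this)
    have : r v = 0 := by
      rw [hv]
      show φ _ = 0
      rw [map_sub, heq, sub_self]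
    exact hr v hvΔ hvne this

/-- Let `G` be a torsion-free abelian group and `A` an associative unital `F`-algebra
(`char F = 0`) such that `A⁺` (with the Jordan product `a∘b = (ab+ba)/2`) is a Jordan
`G`-torus for a decomposition `𝒜` of `A`.  Then `A` itself is `G`-graded with the same
homogeneous components: `A^σ A^τ ⊆ A^{σ+τ}`; hence `A` is an associative `G`-torus. -/
theorem stmt9 {G F A : Type*} [AddCommGroup G] [DecidableEq G] [Field F] [CharZero F]
    [Ring A] [Algebra F A]
    (hG : ∀ g : G, g ≠ 0 → ¬IsOfFinAddOrder g)
    (𝒜 : G → Submodule F A)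
    (hinternal : DirectSum.IsInternal 𝒜)
    (hone : (1 : A) ∈ 𝒜 0)
    -- `A⁺` is `G`-graded: the Jordan product maps `𝒜 σ × 𝒜 τ` into `𝒜 (σ+τ)`
    (hjmul : ∀ σ τ : G, ∀ x ∈ 𝒜 σ, ∀ y ∈ 𝒜 τ, (2⁻¹ : F) • (x * y + y * x) ∈ 𝒜 (σ + τ))
    -- (T1): the support generates `G`
    (hsupp : AddSubgroup.closure {σ : G | 𝒜 σ ≠ ⊥} = ⊤)
    -- (T3): homogeneous components have dimension at most one
    (hdim : ∀ σ : G, Module.rank F (𝒜 σ) ≤ 1)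
    -- (T2): nonzero homogeneous elements are invertible in the Jordan algebra `A⁺`
    (hinv : ∀ σ : G, ∀ x ∈ 𝒜 σ, x ≠ 0 →
      ∃ y : A, (2⁻¹ : F) • (x * y + y * x) = 1 ∧
        (2⁻¹ : F) • ((x * x) * y + y * (x * x)) = x) :
    ∀ σ τ : G, ∀ x ∈ 𝒜 σ, ∀ y ∈ 𝒜 τ, x * y ∈ 𝒜 (σ + τ) := by
  classical
  intro σ τ x hx y hy
  -- `𝒜` is closed under halving
  have halfmem : ∀ (k : G) (v : A), v + v ∈ 𝒜 k → v ∈ 𝒜 k := by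
    intro k v hv
    have h2 : (2⁻¹ : F) • (v + v) = v := by
      rw [← two_smul F v, smul_smul, inv_mul_cancel₀ (two_ne_zero), one_smul]
    rw [← h2]
    exact Submodule.smul_mem _ _ hv
  -- symmetrized products are graded
  have hS : ∀ (α β : G) (a b : A), a ∈ 𝒜 α → b ∈ 𝒜 β → a * b + b * a ∈ 𝒜 (α + β) := by
    intro α β a b ha hb
    have h := hjmul α β a ha b hb
    have h2 : a * b + b * a = (2 : F) • ((2⁻¹ : F) • (a * b + b * a)) := by
      rw [smul_smul, mul_inv_cancel₀ (two_ne_zero), one_smul]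
    rw [h2]
    exact Submodule.smul_mem _ _ h
  have hsq : ∀ (α : G) (a : A), a ∈ 𝒜 α → a * a ∈ 𝒜 (α + α) := by
    intro α a ha
    exact halfmem _ _ (hS α α a a ha ha)
  -- membership facts
  have hSxy : x * y + y * x ∈ 𝒜 (σ + τ) := hS σ τ x y hx hy
  have hw : y * x * y ∈ 𝒜 (τ + (τ + σ)) := by
    have h1 : y * x + x * y ∈ 𝒜 (τ + σ) := hS τ σ y x hy hx
    have h2 : y * (y * x + x * y) + (y * x + x * y) * y ∈ 𝒜 (τ + (τ + σ)) :=
      hS _ _ _ _ hy h1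
    have h3 : y * y ∈ 𝒜 (τ + τ) := hsq τ y hy
    have h4 : (y * y) * x + x * (y * y) ∈ 𝒜 ((τ + τ) + σ) := hS _ _ _ _ h3 hx
    have e : (τ + τ) + σ = τ + (τ + σ) := by abel
    rw [e] at h4
    apply halfmem
    have idty : y * x * y + y * x * y =
        (y * (y * x + x * y) + (y * x + x * y) * y) - ((y * y) * x + x * (y * y)) := by
      noncomm_ring
    rw [idty]
    exact Submodule.sub_mem _ h2 h4
  have hxyyx : x * (y * y) * x ∈ 𝒜 (σ + (σ + (τ + τ))) := by
    have h3 : y * y ∈ 𝒜 (τ + τ) := hsq τ y hy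
    have h1 : x * (y * y) + (y * y) * x ∈ 𝒜 (σ + (τ + τ)) := hS _ _ _ _ hx h3
    have h2 : x * (x * (y * y) + (y * y) * x) + (x * (y * y) + (y * y) * x) * x
        ∈ 𝒜 (σ + (σ + (τ + τ))) := hS _ _ _ _ hx h1
    have h5 : x * x ∈ 𝒜 (σ + σ) := hsq σ x hx
    have h4 : (x * x) * (y * y) + (y * y) * (x * x) ∈ 𝒜 ((σ + σ) + (τ + τ)) :=
      hS _ _ _ _ h5 h3
    have e : (σ + σ) + (τ + τ) = σ + (σ + (τ + τ)) := by abel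
    rw [e] at h4
    apply halfmem
    have idty : x * (y * y) * x + x * (y * y) * x =
        (x * (x * (y * y) + (y * y) * x) + (x * (y * y) + (y * y) * x) * x)
          - ((x * x) * (y * y) + (y * y) * (x * x)) := by
      noncomm_ring
    rw [idty]
    exact Submodule.sub_mem _ h2 h4
  have hyxxy : y * (x * x) * y ∈ 𝒜 (τ + (τ + (σ + σ))) := by
    have h3 : x * x ∈ 𝒜 (σ + σ) := hsq σ x hx
    have h1 : y * (x * x) + (x * x) * y ∈ 𝒜 (τ + (σ + σ)) := hS _ _ _ _ hy h3
    have h2 : y * (y * (x * x) + (x * x) * y) + (y * (x * x) + (x * x) * y) * y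
        ∈ 𝒜 (τ + (τ + (σ + σ))) := hS _ _ _ _ hy h1
    have h5 : y * y ∈ 𝒜 (τ + τ) := hsq τ y hy
    have h4 : (y * y) * (x * x) + (x * x) * (y * y) ∈ 𝒜 ((τ + τ) + (σ + σ)) :=
      hS _ _ _ _ h5 h3
    have e : (τ + τ) + (σ + σ) = τ + (τ + (σ + σ)) := by abel
    rw [e] at h4
    apply halfmem
    have idty : y * (x * x) * y + y * (x * x) * y =
        (y * (y * (x * x) + (x * x) * y) + (y * (x * x) + (x * x) * y) * y)
          - ((y * y) * (x * x) + (x * x) * (y * y)) := by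
      noncomm_ring
    rw [idty]
    exact Submodule.sub_mem _ h2 h4
  have hSxw : x * (y * x * y) + (y * x * y) * x ∈ 𝒜 (σ + (τ + (τ + σ))) :=
    hS _ _ _ _ hx hw
  -- the commutator and its square
  set c : A := x * y - y * x with hcdef
  have hc2 : c * c ∈ 𝒜 ((σ + τ) + (σ + τ)) := by
    have e1 : σ + (τ + (τ + σ)) = (σ + τ) + (σ + τ) := by abel
    have e2 : σ + (σ + (τ + τ)) = (σ + τ) + (σ + τ) := by abel
    have e3 : τ + (τ + (σ + σ)) = (σ + τ) + (σ + τ) := by abel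
    rw [e1] at hSxw; rw [e2] at hxyyx; rw [e3] at hyxxy
    have idty : c * c =
        (x * (y * x * y) + (y * x * y) * x) - x * (y * y) * x - y * (x * x) * y := by
      rw [hcdef]; noncomm_ring
    rw [idty]
    exact Submodule.sub_mem _ (Submodule.sub_mem _ hSxw hxyyx) hyxxy
  -- nonzero homogeneous elements have nonzero square
  have hNZ : ∀ (k : G) (a : A), a ∈ 𝒜 k → a ≠ 0 → a * a ≠ 0 := by
    intro k a ha hne hsq0
    obtain ⟨b, _h1, h2⟩ := hinv k a ha hne
    rw [hsq0] at h2
    simp only [zero_mul, mul_zero, add_zero, smul_zero] at h2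
    exact hne h2.symm
  -- it suffices to prove the commutator is homogeneous of degree σ + τ
  suffices hcρ : c ∈ 𝒜 (σ + τ) by
    apply halfmem
    have idty : x * y + x * y = (x * y + y * x) + c := by rw [hcdef]; noncomm_ring
    rw [idty]
    exact Submodule.add_mem _ hSxy hcρ
  -- decompose c
  letI : DirectSum.Decomposition 𝒜 := hinternal.chooseDecomposition
  set Dc : Finset G := (DirectSum.decompose 𝒜 c).support with hDcdef
  have hcomp : ∀ g : G, ((DirectSum.decompose 𝒜 c g : A)) ∈ 𝒜 g := fun g => SetLike.coe_mem _
  have hrepr : c = ∑ g ∈ Dc, ((DirectSum.decompose 𝒜 c g : A)) :=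
    (DirectSum.sum_support_decompose 𝒜 c).symm
  by_cases hDempty : Dc = ∅
  · have hc0 : c = 0 := by rw [hrepr, hDempty, Finset.sum_empty]
    rw [hc0]; exact zero_mem _
  have hne : Dc.Nonempty := Finset.nonempty_iff_ne_empty.2 hDempty
  obtain ⟨Ψ, Ψadd, Ψinj⟩ := exists_sep_functional hG Dc
  have hspan : ∀ g ∈ Dc, g ∈ Submodule.span ℤ ((Dc : Set G)) := fun g hg =>
    Submodule.subset_span hg
  -- main extremal argument
  have hmain : ∀ M ∈ Dc, (∀ g ∈ Dc, ∀ h ∈ Dc, g + h = M + M → g = M) → M = σ + τ := by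
    intro M hM hpair
    set a : A := (DirectSum.decompose 𝒜 c M : A) with hadef
    have haM : a ∈ 𝒜 M := SetLike.coe_mem _
    have hane : a ≠ 0 := by
      intro h0
      exact (DFinsupp.mem_support_iff.1 hM) ((ZeroMemClass.coe_eq_zero).1 h0)
    let P : A →+ A :=
      { toFun := fun v => (DirectSum.decompose 𝒜 v (M + M) : A)
        map_zero' := by simp
        map_add' := by intro u v; simp }
    have hPne : ∀ (k : G) (v : A), v ∈ 𝒜 k → k ≠ M + M → P v = 0 := fun k v hv hk =>
      DirectSum.decompose_of_mem_ne 𝒜 hv hk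
    have hPsame : ∀ v : A, v ∈ 𝒜 (M + M) → P v = v := fun v hv =>
      DirectSum.decompose_of_mem_same 𝒜 hv
    have h1 : c * c = ∑ g ∈ Dc, ∑ h ∈ Dc,
        ((DirectSum.decompose 𝒜 c g : A) * (DirectSum.decompose 𝒜 c h : A)) := by
      conv_lhs => rw [hrepr]
      exact Finset.sum_mul_sum _ _ _ _
    have h2 : c * c = ∑ g ∈ Dc, ∑ h ∈ Dc,
        ((DirectSum.decompose 𝒜 c h : A) * (DirectSum.decompose 𝒜 c g : A)) :=
      h1.trans Finset.sum_comm
    have hsum : c * c + c * c = ∑ g ∈ Dc, ∑ h ∈ Dc,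
        ((DirectSum.decompose 𝒜 c g : A) * (DirectSum.decompose 𝒜 c h : A)
          + (DirectSum.decompose 𝒜 c h : A) * (DirectSum.decompose 𝒜 c g : A)) := by
      nth_rewrite 1 [h1]
      nth_rewrite 1 [h2]
      rw [← Finset.sum_add_distrib]
      refine Finset.sum_congr rfl ?_
      intro g _
      rw [← Finset.sum_add_distrib]
    -- apply the projection P to both sides
    have hkey : P (c * c) + P (c * c) = a * a + a * a := by
      rw [← map_add, hsum, map_sum]
      have houter : ∀ g ∈ Dc, g ≠ M →
          P (∑ h ∈ Dc, ((DirectSum.decompose 𝒜 c g : A) * (DirectSum.decompose 𝒜 c h : A)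
            + (DirectSum.decompose 𝒜 c h : A) * (DirectSum.decompose 𝒜 c g : A))) = 0 := by
        intro g hg hgM
        rw [map_sum]
        refine Finset.sum_eq_zero ?_
        intro h hh
        refine hPne (g + h) _ (hS g h _ _ (hcomp g) (hcomp h)) ?_
        intro he
        exact hgM (hpair g hg h hh he)
      rw [Finset.sum_eq_single_of_mem M hM (fun g hg hgM => houter g hg hgM)]
      rw [map_sum]
      rw [Finset.sum_eq_single_of_mem M hM (fun h hh hhM => ?_)]
      · exact hPsame _ (hS M M _ _ (hcomp M) (hcomp M))
      · refine hPne (M + h) _ (hS M h _ _ (hcomp M) (hcomp h)) ?_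
        intro he
        exact hhM (add_left_cancel he)
    by_cases hKρ : M + M = (σ + τ) + (σ + τ)
    · by_contra hMne
      have hd : M - (σ + τ) ≠ 0 := sub_ne_zero.2 hMne
      apply hG _ hd
      refine isOfFinAddOrder_iff_nsmul_eq_zero.2 ⟨2, by norm_num, ?_⟩
      have h2n : (2 : ℕ) • (M - (σ + τ)) = (M + M) - ((σ + τ) + (σ + τ)) := by
        rw [two_nsmul, sub_add_sub_comm]
      rw [h2n, hKρ, sub_self]
    · exfalso
      have h0 : P (c * c) = 0 := hPne _ _ hc2 (fun e => hKρ e.symm)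
      rw [h0, add_zero] at hkey
      have haa : a * a = 0 := by
        have h2s : (2 : F) • (a * a) = 0 := by rw [two_smul]; exact hkey.symm
        rcases smul_eq_zero.1 h2s with h | h
        · exact absurd h two_ne_zero
        · exact h
      exact hNZ M a haM hane haa
  -- pick the maximal and minimal elements of the support
  obtain ⟨M, hM, hMmax⟩ := Finset.exists_max_image Dc Ψ hne
  have hpairM : ∀ g ∈ Dc, ∀ h ∈ Dc, g + h = M + M → g = M := by
    intro g hg h hh he
    have h1 : Ψ g + Ψ h = Ψ M + Ψ M := by
      rw [← Ψadd g h (hspan g hg) (hspan h hh), ← Ψadd M M (hspan M hM) (hspan M hM), he]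
    have h2 : Ψ g ≤ Ψ M := hMmax g hg
    have h3 : Ψ h ≤ Ψ M := hMmax h hh
    exact Ψinj g hg M hM (by linarith)
  have hMρ : M = σ + τ := hmain M hM hpairM
  obtain ⟨m, hm, hmmin⟩ := Finset.exists_min_image Dc Ψ hne
  have hpairm : ∀ g ∈ Dc, ∀ h ∈ Dc, g + h = m + m → g = m := by
    intro g hg h hh he
    have h1 : Ψ g + Ψ h = Ψ m + Ψ m := by
      rw [← Ψadd g h (hspan g hg) (hspan h hh), ← Ψadd m m (hspan m hm) (hspan m hm), he]
    have h2 : Ψ m ≤ Ψ g := hmmin g hg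
    have h3 : Ψ m ≤ Ψ h := hmmin h hh
    exact Ψinj g hg m hm (by linarith)
  have hmρ : m = σ + τ := hmain m hm hpairm
  have hMm : M = m := hMρ.trans hmρ.symm
  have hall : ∀ g ∈ Dc, g = σ + τ := by
    intro g hg
    have h2 : Ψ g ≤ Ψ M := hMmax g hg
    have h3 : Ψ m ≤ Ψ g := hmmin g hg
    have : Ψ g = Ψ M := le_antisymm h2 (by rw [hMm]; exact h3)
    exact (Ψinj g hg M hM this).trans hMρ
  rw [hrepr]
  exact Submodule.sum_mem _ (fun g hg => (hall g hg) ▸ (hcomp g))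
end

section
/- Let G be an abelian group, S a pointed reflection subspace of G and Γ a subgroup of G such that 2G ⊆ Γ ⊊ S ⊆ G and S + Γ = S. Let Z = F[Γ] be the group algebra of Γ, let I be a set of coset representatives for the nontrivial cosets {σ+Γ : σ ∈ S}∖{Γ}, and let V be the free Z-module with basis {t_ε}_{ε∈I}. Fix scalars a_ε ∈ F^× and define the Z-bilinear form f on V by f(t_ε, t_η) = a_ε z^{2ε} if ε = η and 0 otherwise. Then the Jordan algebra J = Z ⊕ V of the bilinear form f, graded by J_σ = F z^{σ−ε_σ} t_{ε_σ} for σ ∈ S (where ε_σ ∈ I∪{0} is the unique element with σ − ε_σ ∈ Γ, and t_0 = 1) and J_σ = 0 otherwise, satisfies J_σ J_τ ⊆ J_{σ+τ} for all σ, τ ∈ G; hence J is a G-graded Jordan algebra with supp(J) = S. -/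
noncomputable section
open Classical

variable {G F : Type*} [AddCommGroup G] [Field F] [CharZero F]

/-- The symmetric `Z`-bilinear form `f` on the free `Z = F[Γ]`-module `V` with basis
`{t_ε}_{ε ∈ I}`, given by `f(t_ε, t_ε) = a_ε z^{2ε}` and `f(t_ε, t_η) = 0` for `ε ≠ η`. -/
def cliffordForm (Γ : AddSubgroup G) {I : Type*} (e : I → G)
    (h2 : ∀ ε : I, e ε + e ε ∈ Γ) (a : I → Fˣ)
    (v w : I →₀ AddMonoidAlgebra F Γ) : AddMonoidAlgebra F Γ :=
  v.sum fun ε z =>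
    z * w ε * ((a ε : F) • AddMonoidAlgebra.single (⟨e ε + e ε, h2 ε⟩ : Γ) (1 : F))

/-- The multiplication of the Jordan algebra `J = Z ⊕ V` of the bilinear form `f`:
`(z, v)(z', v') = (zz' + f(v,v'), z v' + z' v)`. -/
def cliffordMul (Γ : AddSubgroup G) {I : Type*} (e : I → G)
    (h2 : ∀ ε : I, e ε + e ε ∈ Γ) (a : I → Fˣ)
    (p q : AddMonoidAlgebra F Γ × (I →₀ AddMonoidAlgebra F Γ)) :
    AddMonoidAlgebra F Γ × (I →₀ AddMonoidAlgebra F Γ) :=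
  (p.1 * q.1 + cliffordForm Γ e h2 a p.2 q.2, p.1 • q.2 + q.1 • p.2)

/-- The homogeneous component `J_σ`: for `σ ∈ Γ` it is `F z^σ` (with `t_0 = 1`), and
for `σ` with `σ - ε ∈ Γ` for some coset representative `ε ∈ I` it is
`F z^{σ-ε} t_ε`; it is `0` otherwise. -/
def cliffordGrade (Γ : AddSubgroup G) {I : Type*} (e : I → G) (σ : G) :
    Submodule F (AddMonoidAlgebra F Γ × (I →₀ AddMonoidAlgebra F Γ)) :=
  (if hσ : σ ∈ Γ then
      Submodule.span F {((AddMonoidAlgebra.single (⟨σ, hσ⟩ : Γ) (1 : F),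
        (0 : I →₀ AddMonoidAlgebra F Γ)))}
    else ⊥) ⊔
  ⨆ p : {ε : I // σ - e ε ∈ Γ},
    Submodule.span F {(((0 : AddMonoidAlgebra F Γ),
      Finsupp.single p.1 (AddMonoidAlgebra.single (⟨σ - e p.1, p.2⟩ : Γ) (1 : F))))}

set_option linter.unusedSectionVars false

lemma cliffordForm_add_left (Γ : AddSubgroup G) {I : Type*} (e : I → G)
    (h2 : ∀ ε : I, e ε + e ε ∈ Γ) (a : I → Fˣ)
    (v₁ v₂ w : I →₀ AddMonoidAlgebra F Γ) :
    cliffordForm Γ e h2 a (v₁ + v₂) w =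
      cliffordForm Γ e h2 a v₁ w + cliffordForm Γ e h2 a v₂ w := by
  unfold cliffordForm
  rw [Finsupp.sum_add_index'] <;> intros <;> simp [add_mul]

lemma cliffordForm_smul_left (Γ : AddSubgroup G) {I : Type*} (e : I → G)
    (h2 : ∀ ε : I, e ε + e ε ∈ Γ) (a : I → Fˣ) (r : F)
    (v w : I →₀ AddMonoidAlgebra F Γ) :
    cliffordForm Γ e h2 a (r • v) w = r • cliffordForm Γ e h2 a v w := by
  unfold cliffordForm
  rw [Finsupp.sum_smul_index' (by intro ε; simp), Finsupp.smul_sum]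
  congr 1; ext ε z
  rw [smul_mul_assoc, smul_mul_assoc]

lemma cliffordForm_add_right (Γ : AddSubgroup G) {I : Type*} (e : I → G)
    (h2 : ∀ ε : I, e ε + e ε ∈ Γ) (a : I → Fˣ)
    (v w₁ w₂ : I →₀ AddMonoidAlgebra F Γ) :
    cliffordForm Γ e h2 a v (w₁ + w₂) =
      cliffordForm Γ e h2 a v w₁ + cliffordForm Γ e h2 a v w₂ := by
  unfold cliffordForm
  rw [← Finsupp.sum_add]
  congr 1; ext ε z
  simp [mul_add, add_mul]

lemma cliffordForm_smul_right (Γ : AddSubgroup G) {I : Type*} (e : I → G)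
    (h2 : ∀ ε : I, e ε + e ε ∈ Γ) (a : I → Fˣ) (r : F)
    (v w : I →₀ AddMonoidAlgebra F Γ) :
    cliffordForm Γ e h2 a v (r • w) = r • cliffordForm Γ e h2 a v w := by
  unfold cliffordForm
  rw [Finsupp.smul_sum]
  congr 1; ext ε z
  simp [Finsupp.smul_apply, mul_smul_comm, smul_mul_assoc]

lemma cliffordForm_zero_left (Γ : AddSubgroup G) {I : Type*} (e : I → G)
    (h2 : ∀ ε : I, e ε + e ε ∈ Γ) (a : I → Fˣ)
    (w : I →₀ AddMonoidAlgebra F Γ) :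
    cliffordForm Γ e h2 a 0 w = 0 := by
  simp [cliffordForm]

lemma cliffordForm_zero_right (Γ : AddSubgroup G) {I : Type*} (e : I → G)
    (h2 : ∀ ε : I, e ε + e ε ∈ Γ) (a : I → Fˣ)
    (v : I →₀ AddMonoidAlgebra F Γ) :
    cliffordForm Γ e h2 a v 0 = 0 := by
  simp [cliffordForm]

lemma cliffordForm_single_single (Γ : AddSubgroup G) {I : Type*} (e : I → G)
    (h2 : ∀ ε : I, e ε + e ε ∈ Γ) (a : I → Fˣ)
    (ε η : I) (z₁ z₂ : AddMonoidAlgebra F Γ) :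
    cliffordForm Γ e h2 a (Finsupp.single ε z₁) (Finsupp.single η z₂) =
      if ε = η then
        z₁ * z₂ * ((a ε : F) • AddMonoidAlgebra.single (⟨e ε + e ε, h2 ε⟩ : Γ) (1 : F))
      else 0 := by
  unfold cliffordForm
  rw [Finsupp.sum_single_index (by simp)]
  by_cases h : ε = η
  · subst h; simp
  · simp [Finsupp.single_eq_of_ne (Ne.symm h), h]

lemma cliffordMul_add_left (Γ : AddSubgroup G) {I : Type*} (e : I → G)
    (h2 : ∀ ε : I, e ε + e ε ∈ Γ) (a : I → Fˣ)
    (p₁ p₂ q : AddMonoidAlgebra F Γ × (I →₀ AddMonoidAlgebra F Γ)) :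
    cliffordMul Γ e h2 a (p₁ + p₂) q = cliffordMul Γ e h2 a p₁ q + cliffordMul Γ e h2 a p₂ q := by
  unfold cliffordMul
  ext
  · simp [cliffordForm_add_left, add_mul]; ring
  · simp [add_smul, smul_add]; abel

lemma cliffordMul_add_right (Γ : AddSubgroup G) {I : Type*} (e : I → G)
    (h2 : ∀ ε : I, e ε + e ε ∈ Γ) (a : I → Fˣ)
    (p q₁ q₂ : AddMonoidAlgebra F Γ × (I →₀ AddMonoidAlgebra F Γ)) :
    cliffordMul Γ e h2 a p (q₁ + q₂) = cliffordMul Γ e h2 a p q₁ + cliffordMul Γ e h2 a p q₂ := by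
  unfold cliffordMul
  ext
  · simp [cliffordForm_add_right, mul_add]; ring
  · simp [add_smul, smul_add]; abel

lemma cliffordMul_smul_left (Γ : AddSubgroup G) {I : Type*} (e : I → G)
    (h2 : ∀ ε : I, e ε + e ε ∈ Γ) (a : I → Fˣ) (r : F)
    (p q : AddMonoidAlgebra F Γ × (I →₀ AddMonoidAlgebra F Γ)) :
    cliffordMul Γ e h2 a (r • p) q = r • cliffordMul Γ e h2 a p q := by
  unfold cliffordMul
  ext
  · simp [cliffordForm_smul_left, smul_mul_assoc, smul_add]
  · simp [smul_add, smul_smul, smul_comm r q.1]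

lemma cliffordMul_smul_right (Γ : AddSubgroup G) {I : Type*} (e : I → G)
    (h2 : ∀ ε : I, e ε + e ε ∈ Γ) (a : I → Fˣ) (r : F)
    (p q : AddMonoidAlgebra F Γ × (I →₀ AddMonoidAlgebra F Γ)) :
    cliffordMul Γ e h2 a p (r • q) = r • cliffordMul Γ e h2 a p q := by
  unfold cliffordMul
  ext
  · simp [cliffordForm_smul_right, mul_smul_comm, smul_add]
  · simp [smul_add, smul_smul, smul_comm r p.1]

lemma mem_cliffordGrade_A (Γ : AddSubgroup G) {I : Type*} (e : I → G) {σ : G} (hσ : σ ∈ Γ) :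
    ((AddMonoidAlgebra.single (⟨σ, hσ⟩ : Γ) (1 : F), (0 : I →₀ AddMonoidAlgebra F Γ)))
      ∈ cliffordGrade (F := F) Γ e σ := by
  apply Submodule.mem_sup_left
  rw [dif_pos hσ]
  exact Submodule.subset_span rfl

lemma mem_cliffordGrade_B (Γ : AddSubgroup G) {I : Type*} (e : I → G) {σ : G}
    (ε : I) (h : σ - e ε ∈ Γ) :
    (((0 : AddMonoidAlgebra F Γ),
      Finsupp.single ε (AddMonoidAlgebra.single (⟨σ - e ε, h⟩ : Γ) (1 : F))))
      ∈ cliffordGrade (F := F) Γ e σ := by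
  apply Submodule.mem_sup_right
  exact Submodule.mem_iSup_of_mem ⟨ε, h⟩ (Submodule.subset_span rfl)

lemma cliffordGrade_induction (Γ : AddSubgroup G) {I : Type*} (e : I → G) (σ : G)
    {P : AddMonoidAlgebra F Γ × (I →₀ AddMonoidAlgebra F Γ) → Prop}
    (x : AddMonoidAlgebra F Γ × (I →₀ AddMonoidAlgebra F Γ))
    (hx : x ∈ cliffordGrade (F := F) Γ e σ)
    (h0 : P 0) (hadd : ∀ x y, P x → P y → P (x + y))
    (hsmul : ∀ (r : F) x, P x → P (r • x))
    (hA : ∀ hσ : σ ∈ Γ, P (AddMonoidAlgebra.single (⟨σ, hσ⟩ : Γ) (1 : F), 0))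
    (hB : ∀ (ε : I) (h : σ - e ε ∈ Γ),
      P (0, Finsupp.single ε (AddMonoidAlgebra.single (⟨σ - e ε, h⟩ : Γ) (1 : F)))) :
    P x := by
  unfold cliffordGrade at hx
  rcases Submodule.mem_sup.mp hx with ⟨u, hu, v, hv, rfl⟩
  apply hadd
  · by_cases hσ : σ ∈ Γ
    · rw [dif_pos hσ] at hu
      rcases Submodule.mem_span_singleton.mp hu with ⟨r, rfl⟩
      exact hsmul r _ (hA hσ)
    · rw [dif_neg hσ] at hu
      rw [Submodule.mem_bot] at hu
      subst hu; exact h0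
  · refine Submodule.iSup_induction (motive := P) _ hv (fun p y hy => ?_) h0 hadd
    rcases Submodule.mem_span_singleton.mp hy with ⟨r, rfl⟩
    exact hsmul r _ (hB p.1 p.2)

lemma single_gamma_eq {Γ : AddSubgroup G} {γ γ' : Γ} (h : (γ : G) = γ') :
    AddMonoidAlgebra.single γ (1 : F) = AddMonoidAlgebra.single γ' (1 : F) := by
  rw [Subtype.ext h]

/-- Let `S` be a pointed reflection subspace of `G` and `Γ ≤ G` with `2G ⊆ Γ ⊊ S ⊆ G`
and `S + Γ = S`.  With `I` a set of coset representatives for the nontrivial cosets of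
`Γ` in `S` and scalars `a_ε ∈ F^×`, the Jordan algebra `J = Z ⊕ V` of the bilinear form
`f` satisfies `J_σ J_τ ⊆ J_{σ+τ}` for all `σ, τ ∈ G`; hence `J` is a `G`-graded Jordan
algebra with `supp J = S`. -/
theorem stmt11 (S : Set G) (Γ : AddSubgroup G)
    -- `S` is a pointed reflection subspace of `G`
    (hS0 : (0 : G) ∈ S) (hSrefl : ∀ s ∈ S, ∀ t ∈ S, s - 2 • t ∈ S)
    (hSgen : AddSubgroup.closure S = ⊤)
    -- `2G ⊆ Γ ⊊ S` and `S + Γ = S`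
    (h2G : ∀ g : G, g + g ∈ Γ)
    (hΓS : (Γ : Set G) ⊂ S)
    (hSΓ : ∀ σ ∈ S, ∀ γ ∈ Γ, σ + γ ∈ S)
    {I : Type*} (e : I → G) (a : I → Fˣ)
    -- `e` enumerates coset representatives of the nontrivial cosets of `Γ` in `S`
    (heS : ∀ ε : I, e ε ∈ S) (heΓ : ∀ ε : I, e ε ∉ Γ)
    (hrep : ∀ σ ∈ S, σ ∉ Γ → ∃! ε : I, σ - e ε ∈ Γ)
    (h2 : ∀ ε : I, e ε + e ε ∈ Γ) :
    (∀ σ τ : G, ∀ x ∈ cliffordGrade (F := F) Γ e σ, ∀ y ∈ cliffordGrade (F := F) Γ e τ,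
        cliffordMul Γ e h2 a x y ∈ cliffordGrade (F := F) Γ e (σ + τ)) ∧
    (∀ σ : G, cliffordGrade (F := F) Γ e σ ≠ ⊥ ↔ σ ∈ S) := by
  constructor
  · intro σ τ x hx
    refine cliffordGrade_induction Γ e σ
      (P := fun x => ∀ y ∈ cliffordGrade (F := F) Γ e τ,
        cliffordMul Γ e h2 a x y ∈ cliffordGrade (F := F) Γ e (σ + τ)) x hx ?_ ?_ ?_ ?_ ?_
    · intro y _
      have h0 : cliffordMul Γ e h2 a 0 y = 0 := by
        simp [cliffordMul, cliffordForm_zero_left]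
      rw [h0]; exact zero_mem _
    · intro x₁ x₂ h₁ h₂ y hy
      rw [cliffordMul_add_left]; exact add_mem (h₁ y hy) (h₂ y hy)
    · intro r x h y hy
      rw [cliffordMul_smul_left]; exact Submodule.smul_mem _ r (h y hy)
    · -- x = z^σ
      intro hσ y hy
      refine cliffordGrade_induction Γ e τ
        (P := fun y => cliffordMul Γ e h2 a
          (AddMonoidAlgebra.single (⟨σ, hσ⟩ : Γ) (1 : F), 0) y
            ∈ cliffordGrade (F := F) Γ e (σ + τ)) y hy ?_ ?_ ?_ ?_ ?_
      · have h0 : cliffordMul Γ e h2 a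
            (AddMonoidAlgebra.single (⟨σ, hσ⟩ : Γ) (1 : F), 0) 0 = 0 := by
          simp [cliffordMul, cliffordForm_zero_right]
        beta_reduce
        rw [h0]; exact zero_mem _
      · intro y₁ y₂ h₁ h₂
        rw [cliffordMul_add_right]; exact add_mem h₁ h₂
      · intro r y h
        rw [cliffordMul_smul_right]; exact Submodule.smul_mem _ r h
      · -- AA
        intro hτ
        have heq : cliffordMul Γ e h2 a
            (AddMonoidAlgebra.single (⟨σ, hσ⟩ : Γ) (1 : F), 0)
            (AddMonoidAlgebra.single (⟨τ, hτ⟩ : Γ) (1 : F), 0)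
            = (AddMonoidAlgebra.single (⟨σ + τ, add_mem hσ hτ⟩ : Γ) (1 : F), 0) := by
          have key : (⟨σ, hσ⟩ + ⟨τ, hτ⟩ : Γ) = (⟨σ + τ, add_mem hσ hτ⟩ : Γ) := rfl
          simp [cliffordMul, cliffordForm_zero_left, AddMonoidAlgebra.single_mul_single, key]
        rw [heq]; exact mem_cliffordGrade_A Γ e _
      · -- AB
        intro η hη
        have hmem : σ + τ - e η ∈ Γ := by
          rw [add_sub_assoc]; exact add_mem hσ hη
        have key : (⟨σ, hσ⟩ + ⟨τ - e η, hη⟩ : Γ) = (⟨σ + τ - e η, hmem⟩ : Γ) :=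
          Subtype.ext (by simp [add_sub_assoc])
        have heq : cliffordMul Γ e h2 a
            (AddMonoidAlgebra.single (⟨σ, hσ⟩ : Γ) (1 : F), 0)
            (0, Finsupp.single η (AddMonoidAlgebra.single (⟨τ - e η, hη⟩ : Γ) (1 : F)))
            = (0, Finsupp.single η
                (AddMonoidAlgebra.single (⟨σ + τ - e η, hmem⟩ : Γ) (1 : F))) := by
          simp [cliffordMul, cliffordForm_zero_left, Finsupp.smul_single, smul_eq_mul,
            AddMonoidAlgebra.single_mul_single, key]
        rw [heq]; exact mem_cliffordGrade_B Γ e η hmem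
    · -- x = z^{σ-eε} t_ε
      intro ε hε y hy
      refine cliffordGrade_induction Γ e τ
        (P := fun y => cliffordMul Γ e h2 a
          (0, Finsupp.single ε (AddMonoidAlgebra.single (⟨σ - e ε, hε⟩ : Γ) (1 : F))) y
            ∈ cliffordGrade (F := F) Γ e (σ + τ)) y hy ?_ ?_ ?_ ?_ ?_
      · have h0 : cliffordMul Γ e h2 a
            (0, Finsupp.single ε (AddMonoidAlgebra.single (⟨σ - e ε, hε⟩ : Γ) (1 : F))) 0
            = 0 := by
          simp [cliffordMul, cliffordForm_zero_right]
        beta_reduce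
        rw [h0]; exact zero_mem _
      · intro y₁ y₂ h₁ h₂
        rw [cliffordMul_add_right]; exact add_mem h₁ h₂
      · intro r y h
        rw [cliffordMul_smul_right]; exact Submodule.smul_mem _ r h
      · -- BA
        intro hτ
        have hmem : σ + τ - e ε ∈ Γ := by
          have : σ + τ - e ε = τ + (σ - e ε) := by abel
          rw [this]; exact add_mem hτ hε
        have key : (⟨τ, hτ⟩ + ⟨σ - e ε, hε⟩ : Γ) = (⟨σ + τ - e ε, hmem⟩ : Γ) :=
          Subtype.ext (by simp; abel)
        have heq : cliffordMul Γ e h2 a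
            (0, Finsupp.single ε (AddMonoidAlgebra.single (⟨σ - e ε, hε⟩ : Γ) (1 : F)))
            (AddMonoidAlgebra.single (⟨τ, hτ⟩ : Γ) (1 : F), 0)
            = (0, Finsupp.single ε
                (AddMonoidAlgebra.single (⟨σ + τ - e ε, hmem⟩ : Γ) (1 : F))) := by
          simp [cliffordMul, cliffordForm_zero_right, Finsupp.smul_single, smul_eq_mul,
            AddMonoidAlgebra.single_mul_single, key]
        rw [heq]; exact mem_cliffordGrade_B Γ e ε hmem
      · -- BB
        intro η hη
        by_cases hεη : ε = η
        · subst hεη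
          have hmem : σ + τ ∈ Γ := by
            have h' := add_mem (add_mem hε hη) (h2 ε)
            have : σ - e ε + (τ - e ε) + (e ε + e ε) = σ + τ := by abel
            rwa [this] at h'
          have key : (⟨σ - e ε, hε⟩ + ⟨τ - e ε, hη⟩ + ⟨e ε + e ε, h2 ε⟩ : Γ)
              = (⟨σ + τ, hmem⟩ : Γ) := Subtype.ext (by simp; abel)
          have heq : cliffordMul Γ e h2 a
              (0, Finsupp.single ε (AddMonoidAlgebra.single (⟨σ - e ε, hε⟩ : Γ) (1 : F)))
              (0, Finsupp.single ε (AddMonoidAlgebra.single (⟨τ - e ε, hη⟩ : Γ) (1 : F)))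
              = ((a ε : F) • (AddMonoidAlgebra.single (⟨σ + τ, hmem⟩ : Γ) (1 : F), 0)) := by
            unfold cliffordMul
            rw [cliffordForm_single_single, if_pos rfl, mul_smul_comm,
              AddMonoidAlgebra.single_mul_single, AddMonoidAlgebra.single_mul_single, key]
            simp
          rw [heq]
          exact Submodule.smul_mem _ _ (mem_cliffordGrade_A Γ e hmem)
        · have heq : cliffordMul Γ e h2 a
              (0, Finsupp.single ε (AddMonoidAlgebra.single (⟨σ - e ε, hε⟩ : Γ) (1 : F)))
              (0, Finsupp.single η (AddMonoidAlgebra.single (⟨τ - e η, hη⟩ : Γ) (1 : F)))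
              = 0 := by
            simp [cliffordMul, cliffordForm_single_single, hεη]
          rw [heq]; exact zero_mem _
  · intro σ
    constructor
    · intro hne
      by_contra hσS
      apply hne
      have hσΓ : σ ∉ Γ := fun h => hσS (hΓS.1 h)
      have hempty : IsEmpty {ε : I // σ - e ε ∈ Γ} := by
        refine ⟨fun p => hσS ?_⟩
        have := hSΓ (e p.1) (heS p.1) (σ - e p.1) p.2
        rwa [add_sub_cancel] at this
      unfold cliffordGrade
      rw [dif_neg hσΓ, iSup_of_empty, sup_bot_eq]
    · intro hσS hbot
      by_cases hσΓ : σ ∈ Γ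
      · have hmem := mem_cliffordGrade_A (F := F) Γ e hσΓ
        rw [hbot, Submodule.mem_bot] at hmem
        have : AddMonoidAlgebra.single (⟨σ, hσΓ⟩ : Γ) (1 : F) = 0 :=
          congrArg Prod.fst hmem
        exact one_ne_zero (AddMonoidAlgebra.single_eq_zero.mp this)
      · obtain ⟨ε, hε, -⟩ := hrep σ hσS hσΓ
        have hmem := mem_cliffordGrade_B (F := F) Γ e ε hε
        rw [hbot, Submodule.mem_bot] at hmem
        have h2' : Finsupp.single ε
            (AddMonoidAlgebra.single (⟨σ - e ε, hε⟩ : Γ) (1 : F)) = 0 :=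
          congrArg Prod.snd hmem
        have := Finsupp.single_eq_zero.mp h2'
        exact one_ne_zero (AddMonoidAlgebra.single_eq_zero.mp this)


end
end

section
/- Let G be a torsion-free abelian group, F a field of characteristic zero containing a primitive third root of unity q, and Γ ≤ G a subgroup with 3G ⊆ Γ and |G/Γ| = 9. Fix σ₁, σ₂ ∈ G whose images form a basis of G/Γ over the field of 3 elements, and let μ : Γ × Γ → F^× be a symmetric 2-cocycle. Then the map λ : G × G → F^× defined by λ(iσ₁+jσ₂+γ, i'σ₁+j'σ₂+γ') = q^{ji'} · μ(η(i+i')σ₁, η(j+j')σ₂) · μ(γ,γ') · μ(η(i+i')σ₁ + η(j+j')σ₂, γ+γ') for 0 ≤ i,j,i',j' ≤ 2 and γ, γ' ∈ Γ, is a 2-cocycle on G. -/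
/-- `η(n) = n − (n mod 3)`. -/
def etaN (n : ℕ) : ℕ := n - n % 3

namespace Stmt14Aux

/-- Product of `ν` along partial sums. -/
def qprod {M R : Type*} [AddCommMonoid M] [CommMonoid R] (ν : M → M → R) : M → List M → R
  | _, [] => 1
  | s, x :: l => ν s x * qprod ν (s + x) l

theorem qprod_perm {M R : Type*} [AddCommMonoid M] [CommMonoid R] (ν : M → M → R)
    (hsym : ∀ a b, ν a b = ν b a)
    (hcoc : ∀ a b c, ν (a+b) c * ν a b = ν a (b+c) * ν b c)
    {l₁ l₂ : List M} (h : l₁.Perm l₂) : ∀ s, qprod ν s l₁ = qprod ν s l₂ := by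
  induction h with
  | nil => intro s; rfl
  | cons x _ ih => intro s; simp only [qprod]; rw [ih]
  | swap x y l =>
      intro s
      simp only [qprod]
      rw [← mul_assoc, ← mul_assoc, show s + y + x = s + x + y from by rw [add_right_comm]]
      congr 1
      calc ν s y * ν (s+y) x = ν (s+y) x * ν s y := mul_comm _ _
        _ = ν s (y+x) * ν y x := hcoc s y x
        _ = ν s (x+y) * ν x y := by rw [add_comm y x, hsym y x]
        _ = ν (s+x) y * ν s x := (hcoc s x y).symm
        _ = ν s x * ν (s+x) y := mul_comm _ _
  | trans _ _ ih1 ih2 => intro s; rw [ih1, ih2]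

theorem qprod_perm_cons {M R : Type*} [AddCommGroup M] [CommMonoidWithZero R] [IsCancelMulZero R]
    (ν : M → M → R)
    (hsym : ∀ a b, ν a b = ν b a)
    (hcoc : ∀ a b c, ν (a+b) c * ν a b = ν a (b+c) * ν b c)
    (hne : ∀ a b, ν a b ≠ 0)
    {x y : M} {l₁ l₂ : List M} (h : (x::l₁).Perm (y::l₂)) :
    qprod ν x l₁ = qprod ν y l₂ := by
  have h0 : ∀ a : M, ν 0 a = ν 0 0 := by
    intro a
    have h1 := hcoc 0 0 a
    simp only [zero_add, add_zero] at h1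
    exact (mul_left_cancel₀ (hne 0 a) h1).symm
  have h2 := qprod_perm ν hsym hcoc h 0
  simp only [qprod, zero_add] at h2
  rw [h0 x, h0 y] at h2
  exact mul_left_cancel₀ (hne 0 0) h2

theorem perm_aux {α : Type*} {a a' b b' c c' d d' x y z : α}
    (h1 : [a,a'].Perm [c,c']) (h2 : [b,b'].Perm [d,d']) :
    [a,b,x,y,z,a',b'].Perm [c,d,y,z,x,c',d'] := by
  have k1 : [a,b,x,y,z,a',b'].Perm ([a,a'] ++ [b,b'] ++ [x,y,z]) := by
    let f : ℕ → α := fun n => [a,b,x,y,z,a',b'].getD n a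
    have e1 : [a,b,x,y,z,a',b'] = List.map f [0,1,2,3,4,5,6] := rfl
    have e2 : ([a,a'] ++ [b,b'] ++ [x,y,z]) = List.map f [0,5,1,6,2,3,4] := rfl
    rw [e1, e2]
    exact List.Perm.map f (by decide)
  have k2 : [c,d,y,z,x,c',d'].Perm ([c,c'] ++ [d,d'] ++ [y,z,x]) := by
    let f : ℕ → α := fun n => [c,d,y,z,x,c',d'].getD n c
    have e1 : [c,d,y,z,x,c',d'] = List.map f [0,1,2,3,4,5,6] := rfl
    have e2 : ([c,c'] ++ [d,d'] ++ [y,z,x]) = List.map f [0,5,1,6,2,3,4] := rfl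
    rw [e1, e2]
    exact List.Perm.map f (by decide)
  have k3 : ([x,y,z] : List α).Perm [y,z,x] :=
    (List.Perm.swap y x [z]).trans (List.Perm.cons y (List.Perm.swap z x []))
  exact k1.trans (((h1.append h2).append k3).trans k2.symm)

end Stmt14Aux

open Stmt14Aux in
/-- Let `G` be a torsion-free abelian group, `F` a field of characteristic zero
containing a primitive third root of unity `q`, and `Γ ≤ G` with `3G ⊆ Γ` and
`|G/Γ| = 9`.  Fix `σ₁, σ₂ ∈ G` whose images form a basis of `G/Γ` over `𝔽₃`, and a
symmetric 2-cocycle `μ` on `Γ`.  Then the map `λ` defined by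
`λ(iσ₁+jσ₂+γ, i'σ₁+j'σ₂+γ') = q^{ji'} μ(η(i+i')σ₁, η(j+j')σ₂) μ(γ,γ')
μ(η(i+i')σ₁+η(j+j')σ₂, γ+γ')` is a 2-cocycle on `G`. -/
theorem stmt14 {G F : Type*} [AddCommGroup G] [Field F] [CharZero F]
    (hG : ∀ g : G, g ≠ 0 → ¬IsOfFinAddOrder g)
    (Γ : AddSubgroup G) (h3 : ∀ g : G, (3 : ℕ) • g ∈ Γ)
    (hcard : Nat.card (G ⧸ Γ) = 9)
    (σ₁ σ₂ : G)
    (hbasis : ∀ σ : G, ∃! t : ℕ × ℕ × Γ, t.1 ≤ 2 ∧ t.2.1 ≤ 2 ∧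
      σ = t.1 • σ₁ + t.2.1 • σ₂ + (t.2.2 : G))
    (q : Fˣ) (hq3 : q ^ 3 = 1) (hq1 : q ≠ 1)
    (μ : Γ → Γ → Fˣ)
    (hμsymm : ∀ γ γ' : Γ, μ γ γ' = μ γ' γ)
    (hμcoc : ∀ γ γ' γ'' : Γ, μ (γ + γ') γ'' * μ γ γ' = μ γ (γ' + γ'') * μ γ' γ'')
    (lam : G → G → Fˣ)
    (hlam : ∀ i j i' j' : ℕ, i ≤ 2 → j ≤ 2 → i' ≤ 2 → j' ≤ 2 →
      ∀ γ γ' δ₁ δ₂ : Γ,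
        (δ₁ : G) = etaN (i + i') • σ₁ → (δ₂ : G) = etaN (j + j') • σ₂ →
        lam (i • σ₁ + j • σ₂ + (γ : G)) (i' • σ₁ + j' • σ₂ + (γ' : G))
          = q ^ (j * i') * μ δ₁ δ₂ * μ γ γ' * μ (δ₁ + δ₂) (γ + γ')) :
    ∀ σ τ ρ : G, lam (σ + τ) ρ * lam σ τ = lam σ (τ + ρ) * lam τ ρ := by
  intro σ τ ρ
  obtain ⟨⟨i₁, j₁, γ₁⟩, ⟨hi₁, hj₁, hσ⟩, -⟩ := hbasis σ
  obtain ⟨⟨i₂, j₂, γ₂⟩, ⟨hi₂, hj₂, hτ⟩, -⟩ := hbasis τ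
  obtain ⟨⟨i₃, j₃, γ₃⟩, ⟨hi₃, hj₃, hρ⟩, -⟩ := hbasis ρ
  -- membership of η(m) • g in Γ
  have hmem : ∀ (g : G) (m : ℕ), etaN m • g ∈ Γ := by
    intro g m
    have h1 : etaN m • g = (m / 3) • ((3:ℕ) • g) := by
      rw [smul_smul]; congr 1; simp only [etaN]; omega
    rw [h1]; exact Γ.nsmul_mem (h3 g) _
  let mkA : ℕ → Γ := fun m => ⟨etaN m • σ₁, hmem σ₁ m⟩
  let mkB : ℕ → Γ := fun m => ⟨etaN m • σ₂, hmem σ₂ m⟩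
  let δA : Γ := mkA (i₁ + i₂)
  let δB : Γ := mkB (j₁ + j₂)
  let δA' : Γ := mkA ((i₁ + i₂) % 3 + i₃)
  let δB' : Γ := mkB ((j₁ + j₂) % 3 + j₃)
  let δC : Γ := mkA (i₂ + i₃)
  let δD : Γ := mkB (j₂ + j₃)
  let δC' : Γ := mkA (i₁ + (i₂ + i₃) % 3)
  let δD' : Γ := mkB (j₁ + (j₂ + j₃) % 3)
  -- the mod-3 facts
  have hexp : ((j₁+j₂)%3 * i₃ + j₁*i₂) % 3 = (j₁*((i₂+i₃)%3) + j₂*i₃) % 3 := by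
    interval_cases j₁ <;> interval_cases j₂ <;> interval_cases i₂ <;> interval_cases i₃ <;> rfl
  have hdisjI : (etaN (i₁+i₂) = etaN (i₂+i₃) ∧ etaN ((i₁+i₂)%3+i₃) = etaN (i₁+(i₂+i₃)%3))
      ∨ (etaN (i₁+i₂) = etaN (i₁+(i₂+i₃)%3) ∧ etaN ((i₁+i₂)%3+i₃) = etaN (i₂+i₃)) := by
    interval_cases i₁ <;> interval_cases i₂ <;> interval_cases i₃ <;> decide
  have hdisjJ : (etaN (j₁+j₂) = etaN (j₂+j₃) ∧ etaN ((j₁+j₂)%3+j₃) = etaN (j₁+(j₂+j₃)%3))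
      ∨ (etaN (j₁+j₂) = etaN (j₁+(j₂+j₃)%3) ∧ etaN ((j₁+j₂)%3+j₃) = etaN (j₂+j₃)) := by
    interval_cases j₁ <;> interval_cases j₂ <;> interval_cases j₃ <;> decide
  -- canonical form of σ + τ and τ + ρ
  have hst : σ + τ = ((i₁+i₂)%3) • σ₁ + ((j₁+j₂)%3) • σ₂ + ((γ₁+γ₂+δA+δB : Γ) : G) := by
    have hc : ((γ₁+γ₂+δA+δB : Γ) : G)
        = (γ₁:G) + γ₂ + etaN (i₁+i₂) • σ₁ + etaN (j₁+j₂) • σ₂ := by push_cast; rfl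
    have e1 : i₁ • σ₁ + i₂ • σ₁ = ((i₁+i₂)%3) • σ₁ + etaN (i₁+i₂) • σ₁ := by
      rw [← add_nsmul, ← add_nsmul]; congr 1; simp only [etaN]; omega
    have e2 : j₁ • σ₂ + j₂ • σ₂ = ((j₁+j₂)%3) • σ₂ + etaN (j₁+j₂) • σ₂ := by
      rw [← add_nsmul, ← add_nsmul]; congr 1; simp only [etaN]; omega
    rw [hσ, hτ, hc]
    calc (i₁ • σ₁ + j₁ • σ₂ + (γ₁:G)) + (i₂ • σ₁ + j₂ • σ₂ + (γ₂:G))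
        = (i₁ • σ₁ + i₂ • σ₁) + (j₁ • σ₂ + j₂ • σ₂) + ((γ₁:G) + γ₂) := by abel
      _ = (((i₁+i₂)%3) • σ₁ + etaN (i₁+i₂) • σ₁) + (((j₁+j₂)%3) • σ₂ + etaN (j₁+j₂) • σ₂)
            + ((γ₁:G) + γ₂) := by rw [e1, e2]
      _ = _ := by abel
  have htr : τ + ρ = ((i₂+i₃)%3) • σ₁ + ((j₂+j₃)%3) • σ₂ + ((γ₂+γ₃+δC+δD : Γ) : G) := by
    have hc : ((γ₂+γ₃+δC+δD : Γ) : G)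
        = (γ₂:G) + γ₃ + etaN (i₂+i₃) • σ₁ + etaN (j₂+j₃) • σ₂ := by push_cast; rfl
    have e1 : i₂ • σ₁ + i₃ • σ₁ = ((i₂+i₃)%3) • σ₁ + etaN (i₂+i₃) • σ₁ := by
      rw [← add_nsmul, ← add_nsmul]; congr 1; simp only [etaN]; omega
    have e2 : j₂ • σ₂ + j₃ • σ₂ = ((j₂+j₃)%3) • σ₂ + etaN (j₂+j₃) • σ₂ := by
      rw [← add_nsmul, ← add_nsmul]; congr 1; simp only [etaN]; omega
    rw [hτ, hρ, hc]
    calc (i₂ • σ₁ + j₂ • σ₂ + (γ₂:G)) + (i₃ • σ₁ + j₃ • σ₂ + (γ₃:G))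
        = (i₂ • σ₁ + i₃ • σ₁) + (j₂ • σ₂ + j₃ • σ₂) + ((γ₂:G) + γ₃) := by abel
      _ = (((i₂+i₃)%3) • σ₁ + etaN (i₂+i₃) • σ₁) + (((j₂+j₃)%3) • σ₂ + etaN (j₂+j₃) • σ₂)
            + ((γ₂:G) + γ₃) := by rw [e1, e2]
      _ = _ := by abel
  -- the four lam-evaluations
  have E1 := hlam i₁ j₁ i₂ j₂ hi₁ hj₁ hi₂ hj₂ γ₁ γ₂ δA δB rfl rfl
  have E2 := hlam i₂ j₂ i₃ j₃ hi₂ hj₂ hi₃ hj₃ γ₂ γ₃ δC δD rfl rfl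
  have E3 := hlam ((i₁+i₂)%3) ((j₁+j₂)%3) i₃ j₃ (by omega) (by omega) hi₃ hj₃
    (γ₁+γ₂+δA+δB) γ₃ δA' δB' rfl rfl
  have E4 := hlam i₁ j₁ ((i₂+i₃)%3) ((j₂+j₃)%3) hi₁ hj₁ (by omega) (by omega)
    γ₁ (γ₂+γ₃+δC+δD) δC' δD' rfl rfl
  rw [← hσ, ← hτ] at E1
  rw [← hτ, ← hρ] at E2
  rw [← hst, ← hρ] at E3
  rw [← hσ, ← htr] at E4
  rw [E3, E1, E4, E2]
  rw [show (γ₁+γ₂+δA+δB : Γ) = δA+δB+γ₁+γ₂ from by abel,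
      show (γ₂+γ₃+δC+δD : Γ) = δC+δD+γ₂+γ₃ from by abel,
      show γ₁+(δC+δD+γ₂+γ₃) = δC+δD+γ₂+γ₃+γ₁ from by abel]
  -- move to F
  rw [Units.ext_iff]
  push_cast
  -- the q-part
  have hqF : ((q:F))^3 = 1 := by
    have h := congrArg (Units.val (α := F)) hq3
    push_cast at h
    exact h
  have hqeq : (q:F)^((j₁+j₂)%3*i₃) * (q:F)^(j₁*i₂)
      = (q:F)^(j₁*((i₂+i₃)%3)) * (q:F)^(j₂*i₃) := by
    rw [← pow_add, ← pow_add]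
    conv_lhs => rw [← Nat.div_add_mod ((j₁+j₂)%3*i₃ + j₁*i₂) 3]
    conv_rhs => rw [← Nat.div_add_mod (j₁*((i₂+i₃)%3) + j₂*i₃) 3]
    rw [pow_add, pow_add, pow_mul, pow_mul, hqF, one_pow, one_pow, hexp]
  -- the μ-part, via qprod
  have hsymF : ∀ a b : Γ, ((μ a b : Fˣ):F) = ((μ b a : Fˣ):F) := fun a b => by rw [hμsymm]
  have hcocF : ∀ a b c : Γ, ((μ (a+b) c : Fˣ):F) * ((μ a b : Fˣ):F)
      = ((μ a (b+c) : Fˣ):F) * ((μ b c : Fˣ):F) :=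
    fun a b c => by exact_mod_cast congrArg Units.val (hμcoc a b c)
  have hne : ∀ a b : Γ, ((μ a b : Fˣ):F) ≠ 0 := fun a b => Units.ne_zero _
  have hL : ((μ δA' δB' : Fˣ):F) * ((μ (δA+δB+γ₁+γ₂) γ₃ : Fˣ):F)
        * ((μ (δA'+δB') (δA+δB+γ₁+γ₂+γ₃) : Fˣ):F)
        * (((μ δA δB : Fˣ):F) * ((μ γ₁ γ₂ : Fˣ):F) * ((μ (δA+δB) (γ₁+γ₂) : Fˣ):F))
      = qprod (fun a b : Γ => ((μ a b : Fˣ):F)) δA [δB,γ₁,γ₂,γ₃,δA',δB'] := by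
    simp only [qprod, mul_one]
    linear_combination
      (-(((μ δA δB : Fˣ):F) * ((μ (δA+δB+γ₁+γ₂) γ₃ : Fˣ):F)
          * ((μ (δA+δB+γ₁+γ₂+γ₃) δA' : Fˣ):F) * ((μ (δA+δB+γ₁+γ₂+γ₃+δA') δB' : Fˣ):F)))
        * hcocF (δA+δB) γ₁ γ₂
      + (-(((μ δA δB : Fˣ):F) * ((μ (δA+δB+γ₁+γ₂) γ₃ : Fˣ):F)
          * ((μ γ₁ γ₂ : Fˣ):F) * ((μ (δA+δB) (γ₁+γ₂) : Fˣ):F)))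
        * hcocF (δA+δB+γ₁+γ₂+γ₃) δA' δB'
      + (-(((μ δA' δB' : Fˣ):F) * ((μ δA δB : Fˣ):F) * ((μ (δA+δB+γ₁+γ₂) γ₃ : Fˣ):F)
          * ((μ γ₁ γ₂ : Fˣ):F) * ((μ (δA+δB) (γ₁+γ₂) : Fˣ):F)))
        * hsymF (δA+δB+γ₁+γ₂+γ₃) (δA'+δB')
  have hR : ((μ δC' δD' : Fˣ):F) * ((μ γ₁ (δC+δD+γ₂+γ₃) : Fˣ):F)
        * ((μ (δC'+δD') (δC+δD+γ₂+γ₃+γ₁) : Fˣ):F)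
        * (((μ δC δD : Fˣ):F) * ((μ γ₂ γ₃ : Fˣ):F) * ((μ (δC+δD) (γ₂+γ₃) : Fˣ):F))
      = qprod (fun a b : Γ => ((μ a b : Fˣ):F)) δC [δD,γ₂,γ₃,γ₁,δC',δD'] := by
    simp only [qprod, mul_one]
    linear_combination
      (((μ δC δD : Fˣ):F) * ((μ (δC+δD) γ₂ : Fˣ):F) * ((μ (δC+δD+γ₂) γ₃ : Fˣ):F)
          * ((μ (δC+δD+γ₂+γ₃+γ₁) δC' : Fˣ):F) * ((μ (δC+δD+γ₂+γ₃+γ₁+δC') δD' : Fˣ):F))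
        * hsymF γ₁ (δC+δD+γ₂+γ₃)
      + (-(((μ δC δD : Fˣ):F) * ((μ γ₁ (δC+δD+γ₂+γ₃) : Fˣ):F)
          * ((μ (δC+δD+γ₂+γ₃+γ₁) δC' : Fˣ):F) * ((μ (δC+δD+γ₂+γ₃+γ₁+δC') δD' : Fˣ):F)))
        * hcocF (δC+δD) γ₂ γ₃
      + (-(((μ δC δD : Fˣ):F) * ((μ γ₁ (δC+δD+γ₂+γ₃) : Fˣ):F)
          * ((μ γ₂ γ₃ : Fˣ):F) * ((μ (δC+δD) (γ₂+γ₃) : Fˣ):F)))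
        * hcocF (δC+δD+γ₂+γ₃+γ₁) δC' δD'
      + (-(((μ δC' δD' : Fˣ):F) * ((μ δC δD : Fˣ):F) * ((μ γ₁ (δC+δD+γ₂+γ₃) : Fˣ):F)
          * ((μ γ₂ γ₃ : Fˣ):F) * ((μ (δC+δD) (γ₂+γ₃) : Fˣ):F)))
        * hsymF (δC+δD+γ₂+γ₃+γ₁) (δC'+δD')
  -- permutation equality of the two qprods
  have pA : ([δA, δA'] : List Γ).Perm [δC, δC'] := by
    rcases hdisjI with ⟨h1, h2⟩ | ⟨h1, h2⟩
    · rw [show δA = δC from Subtype.ext (by show etaN (i₁+i₂) • σ₁ = _ • σ₁; rw [h1]),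
          show δA' = δC' from Subtype.ext (by show etaN ((i₁+i₂)%3+i₃) • σ₁ = _ • σ₁; rw [h2])]
    · rw [show δA = δC' from Subtype.ext (by show etaN (i₁+i₂) • σ₁ = _ • σ₁; rw [h1]),
          show δA' = δC from Subtype.ext (by show etaN ((i₁+i₂)%3+i₃) • σ₁ = _ • σ₁; rw [h2])]
      exact List.Perm.swap δC δC' []
  have pB : ([δB, δB'] : List Γ).Perm [δD, δD'] := by
    rcases hdisjJ with ⟨h1, h2⟩ | ⟨h1, h2⟩
    · rw [show δB = δD from Subtype.ext (by show etaN (j₁+j₂) • σ₂ = _ • σ₂; rw [h1]),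
          show δB' = δD' from Subtype.ext (by show etaN ((j₁+j₂)%3+j₃) • σ₂ = _ • σ₂; rw [h2])]
    · rw [show δB = δD' from Subtype.ext (by show etaN (j₁+j₂) • σ₂ = _ • σ₂; rw [h1]),
          show δB' = δD from Subtype.ext (by show etaN ((j₁+j₂)%3+j₃) • σ₂ = _ • σ₂; rw [h2])]
      exact List.Perm.swap δD δD' []
  have hperm : qprod (fun a b : Γ => ((μ a b : Fˣ):F)) δA [δB,γ₁,γ₂,γ₃,δA',δB']
      = qprod (fun a b : Γ => ((μ a b : Fˣ):F)) δC [δD,γ₂,γ₃,γ₁,δC',δD'] :=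
    qprod_perm_cons _ hsymF hcocF hne (perm_aux pA pB)
  have hμF := hL.trans (hperm.trans hR.symm)
  linear_combination
    (((μ δA' δB' : Fˣ):F) * ((μ (δA+δB+γ₁+γ₂) γ₃ : Fˣ):F)
      * ((μ (δA'+δB') (δA+δB+γ₁+γ₂+γ₃) : Fˣ):F) * ((μ δA δB : Fˣ):F)
      * ((μ γ₁ γ₂ : Fˣ):F) * ((μ (δA+δB) (γ₁+γ₂) : Fˣ):F)) * hqeq
    + ((q:F)^(j₁*((i₂+i₃)%3)) * (q:F)^(j₂*i₃)) * hμF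
end

section
/- Let J be a Jordan G-torus over a field F of characteristic zero, where G is a torsion-free abelian group. If x is a nonzero element of J with x^m ∈ J^σ for some σ ∈ G and positive integer m, then σ ∈ mG and x ∈ J^{σ/m}. -/
/-- Powers in a (not necessarily associative) unital algebra: `x^0 = 1`,
`x^{n+1} = x * x^n`.  In a Jordan algebra (power-associative) this is the Jordan power. -/
def apow {J : Type*} [Mul J] [One J] (x : J) : ℕ → J
  | 0 => 1
  | n + 1 => x * apow x n

/-- Restored from older Mathlib: a torsion-free additive monoid (no nonzero element of finite order). -/
def AddMonoid.IsTorsionFree (G : Type*) [AddMonoid G] : Prop :=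
  ∀ g : G, g ≠ 0 → ¬IsOfFinAddOrder g

/-- Linearization of the Jordan identity (in one variable, char ≠ 2). -/
theorem stmt19_lin {J : Type*} [NonAssocRing J]
    (hjordan : ∀ a b : J, (a * b) * (a * a) = a * (b * (a * a)))
    (two_cancel : ∀ v : J, v + v = 0 → v = 0)
    (a c b : J) :
    (a*b)*(a*c) + (a*b)*(c*a) + (c*b)*(a*a) = a*(b*(a*c)) + a*(b*(c*a)) + c*(b*(a*a)) := by
  have h1 := hjordan (a+c) b
  have h2 := hjordan (a-c) b
  have h3 := hjordan c b
  set T : J := (a*b)*(a*c) + (a*b)*(c*a) + (c*b)*(a*a)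
    - (a*(b*(a*c)) + a*(b*(c*a)) + c*(b*(a*a))) with hT
  have key : T + T =
      (((a+c)*b)*((a+c)*(a+c)) - (a+c)*(b*((a+c)*(a+c))))
      - ((((a-c)*b)*((a-c)*(a-c))) - (a-c)*(b*((a-c)*(a-c))))
      - (((c*b)*(c*c) - c*(b*(c*c))) + ((c*b)*(c*c) - c*(b*(c*c)))) := by
    simp only [hT, add_mul, mul_add, sub_mul, mul_sub]
    abel
  rw [h1, h2, h3] at key
  simp only [sub_self, sub_zero, add_zero, zero_sub, neg_zero] at key
  exact sub_eq_zero.mp (two_cancel T key)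

/-- Power-associativity for commutative Jordan rings (with 2,3 invertible). -/
theorem stmt19_pa {J : Type*} [NonAssocRing J]
    (hcomm : ∀ a b : J, a * b = b * a)
    (hjordan : ∀ a b : J, (a * b) * (a * a) = a * (b * (a * a)))
    (two_cancel : ∀ v : J, v + v = 0 → v = 0)
    (three_cancel : ∀ v : J, v + v + v = 0 → v = 0)
    (x : J) : ∀ n i j : ℕ, i + j = n → apow x i * apow x j = apow x n := by
  have ha : ∀ s t : ℕ, s = t → apow x s = apow x t := fun s t h => by rw [h]
  have d1 : ∀ s : ℕ, x * apow x s = apow x (s+1) := fun s => rfl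
  have a1 : apow x 1 = x := by simp [apow]
  intro n
  induction n using Nat.strong_induction_on with
  | _ n IHn =>
  intro i
  induction i using Nat.strong_induction_on with
  | _ i IHi =>
  intro j hij
  match i, hij with
  | 0, hij =>
    simp only [apow, one_mul]
    rw [Nat.zero_add] at hij; rw [hij]
  | 1, hij =>
    rw [a1, d1 j, ← hij, Nat.add_comm]
  | (k+2), hij =>
  match j, hij with
  | 0, hij =>
    rw [Nat.add_zero] at hij
    show apow x (k+2) * apow x 0 = apow x n
    rw [show apow x 0 = (1:J) from rfl, mul_one, hij]
  | (l+1), hij =>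
    have e2 : x * x = apow x 2 := by simp [apow, mul_one]
    have key := stmt19_lin hjordan two_cancel x (apow x (k+1)) (apow x l)
    rw [hcomm (apow x (k+1)) x] at key
    rw [d1 l, d1 (k+1), e2] at key
    have r2 : apow x l * apow x (k+2) = apow x (k+l+2) :=
      IHn (k+l+2) (by omega) l (k+2) (by omega)
    rw [r2, d1 (k+l+2), ha (k+l+2+1) n (by omega)] at key
    have r1 : apow x (k+1) * apow x l = apow x (k+l+1) :=
      IHn (k+l+1) (by omega) (k+1) l (by omega)
    have r3 : apow x l * apow x 2 = apow x (l+2) := IHn (l+2) (by omega) l 2 (by omega)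
    rw [r1, r3] at key
    have rC : apow x (k+1) * apow x (l+2) = apow x n := IHi (k+1) (by omega) (l+2) (by omega)
    rw [rC] at key
    set A : J := apow x (l+1) * apow x (k+2) with hA
    rw [hcomm (apow x (k+2)) (apow x (l+1))]
    rcases Nat.eq_zero_or_pos k with hk | hk
    · subst hk
      rw [ha (0+l+1) (l+1) (by omega), ha (0+2) 2 (by omega), ← hA] at key
      have h0 : (A - apow x n) + (A - apow x n) + (A - apow x n)
          = (A + A + A) - (apow x n + apow x n + apow x n) := by abel
      rw [key, sub_self] at h0
      exact sub_eq_zero.mp (three_cancel _ h0)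
    · have rB : apow x (k+l+1) * apow x 2 = apow x n := by
        rw [hcomm]; exact IHi 2 (by omega) (k+l+1) (by omega)
      rw [rB] at key
      have h0 : (A - apow x n) + (A - apow x n)
          = (A + A + apow x n) - (apow x n + apow x n + apow x n) := by abel
      rw [key, sub_self] at h0
      exact sub_eq_zero.mp (two_cancel _ h0)

set_option maxHeartbeats 1000000 in
set_option synthInstance.maxHeartbeats 400000 in
/-- Let `J` be a Jordan `G`-torus over a field `F` of characteristic zero, `G`
torsion-free abelian.  If `x ≠ 0` and `x^m ∈ J^σ` for some `σ ∈ G` and `m > 0`, then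
`σ ∈ mG` and `x ∈ J^{σ/m}`. -/
theorem stmt19 {G F J : Type*} [AddCommGroup G] [DecidableEq G] [Field F] [CharZero F]
    [NonAssocRing J] [Module F J]
    (hG : AddMonoid.IsTorsionFree G)
    -- the multiplication of `J` is `F`-bilinear, commutative, and Jordan
    (hbil : ∀ (c : F) (a b : J), (c • a) * b = c • (a * b) ∧ a * (c • b) = c • (a * b))
    (hcomm : ∀ a b : J, a * b = b * a)
    (hjordan : ∀ a b : J, (a * b) * (a * a) = a * (b * (a * a)))
    (𝒥 : G → Submodule F J)
    (hinternal : DirectSum.IsInternal 𝒥)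
    (hone : (1 : J) ∈ 𝒥 0)
    (hmul : ∀ σ τ : G, ∀ x ∈ 𝒥 σ, ∀ y ∈ 𝒥 τ, x * y ∈ 𝒥 (σ + τ))
    (hsupp : AddSubgroup.closure {σ : G | 𝒥 σ ≠ ⊥} = ⊤)
    (hdim : ∀ σ : G, Module.rank F (𝒥 σ) ≤ 1)
    (hinv : ∀ σ : G, ∀ x ∈ 𝒥 σ, x ≠ 0 → ∃ y : J, x * y = 1 ∧ (x * x) * y = x)
    (x : J) (hx : x ≠ 0) (σ : G) (m : ℕ) (hm : 0 < m)
    (hpow : apow x m ∈ 𝒥 σ) :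
    ∃ τ : G, m • τ = σ ∧ x ∈ 𝒥 τ := by
  classical
  -- scalar cancellation
  have nsmul_cancel : ∀ (k : ℕ), k ≠ 0 → ∀ v : J, k • v = 0 → v = 0 := by
    intro k hk v h
    have h2 : ((k : F)) • v = 0 := by rw [Nat.cast_smul_eq_nsmul]; exact h
    rcases smul_eq_zero.mp h2 with h3 | h3
    · exact absurd (Nat.cast_eq_zero.mp h3) hk
    · exact h3
  have two_cancel : ∀ v : J, v + v = 0 → v = 0 := by
    intro v h; exact nsmul_cancel 2 (by norm_num) v (by rw [two_smul]; exact h)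
  have three_cancel : ∀ v : J, v + v + v = 0 → v = 0 := by
    intro v h
    refine nsmul_cancel 3 (by norm_num) v ?_
    rw [show (3 : ℕ) = 2 + 1 from rfl, add_nsmul, two_smul, one_nsmul]; exact h
  have pa := stmt19_pa hcomm hjordan two_cancel three_cancel
  -- the decomposition
  set E := AddEquiv.ofBijective (DirectSum.coeAddMonoidHom 𝒥) hinternal with hEdef
  have hEof : ∀ (γ : G) (w : 𝒥 γ), E (DirectSum.of _ γ w) = (w : J) := by
    intro γ w; exact DirectSum.coeAddMonoidHom_of 𝒥 γ w
  set πh : G → (J →+ J) := fun γ =>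
    (((𝒥 γ).subtype.toAddMonoidHom).comp (DFinsupp.evalAddMonoidHom γ)).comp
      E.symm.toAddMonoidHom with hπdef
  have hπ : ∀ (γ : G) (u : J), πh γ u = ((E.symm u) γ : J) := fun γ u => rfl
  have hπmem : ∀ (γ : G) (u : J), πh γ u ∈ 𝒥 γ := fun γ u => ((E.symm u) γ).2
  have F3a : ∀ (γ : G) (w : J) (hw : w ∈ 𝒥 γ), E.symm w = DirectSum.of _ γ ⟨w, hw⟩ := by
    intro γ w hw
    rw [AddEquiv.symm_apply_eq, hEof]
  have F3 : ∀ (γ δ : G) (w : J), w ∈ 𝒥 δ → γ ≠ δ → πh γ w = 0 := by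
    intro γ δ w hw hne
    rw [hπ, F3a δ w hw, DirectSum.of_eq_of_ne _ _ _ hne, ZeroMemClass.coe_zero]
  have F3' : ∀ (γ : G) (w : J), w ∈ 𝒥 γ → πh γ w = w := by
    intro γ w hw
    rw [hπ, F3a γ w hw, DirectSum.of_eq_same]
  have hsingle : ∀ (γ δ : G) (w : J), w ∈ 𝒥 δ → πh γ w ≠ 0 → γ = δ := by
    intro γ δ w hw hne
    by_contra h; exact hne (F3 γ δ w hw h)
  have F4 : ∀ u : J, u = ∑ γ ∈ (E.symm u).support, πh γ u := by
    intro u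
    conv_lhs => rw [← E.apply_symm_apply u, ← DirectSum.sum_support_of (E.symm u)]
    rw [map_sum]
    exact Finset.sum_congr rfl fun γ _ => hEof γ _
  have PROD : ∀ (u w : J) (γ : G), πh γ (u * w) =
      ∑ p ∈ (E.symm u).support ×ˢ (E.symm w).support,
        πh γ ((πh p.1 u) * (πh p.2 w)) := by
    intro u w γ
    conv_lhs => rw [F4 u, F4 w]
    rw [Finset.sum_mul_sum, map_sum, Finset.sum_product]
    exact Finset.sum_congr rfl fun α _ => map_sum _ _ _
  -- nonvanishing of powers of nonzero homogeneous elements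
  have memapow : ∀ (τ : G) (v : J), v ∈ 𝒥 τ → ∀ k : ℕ, apow v k ∈ 𝒥 (k • τ) := by
    intro τ v hv k
    induction k with
    | zero => rw [zero_nsmul]; exact hone
    | succ k IH =>
      have := hmul τ (k • τ) v hv _ IH
      rwa [show τ + k • τ = (k+1) • τ by rw [succ_nsmul, add_comm]] at this
  have NZ : ∀ (τ : G) (v : J), v ∈ 𝒥 τ → v ≠ 0 → ∀ k : ℕ, apow v k ≠ 0 := by
    intro τ v hv hv0
    have sq : ∀ (ρ : G) (w : J), w ∈ 𝒥 ρ → w ≠ 0 → w * w ≠ 0 := by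
      intro ρ w hw hw0
      obtain ⟨y, -, h2⟩ := hinv ρ w hw hw0
      intro h; rw [h, zero_mul] at h2; exact hw0 h2.symm
    have pow2 : ∀ s : ℕ, apow v (2^s) ≠ 0 := by
      intro s
      induction s with
      | zero => simpa [apow, mul_one] using hv0
      | succ s IH =>
        have hsq := sq (2^s • τ) (apow v (2^s)) (memapow τ v hv (2^s)) IH
        have heq : apow v (2^s) * apow v (2^s) = apow v (2^(s+1)) :=
          pa v (2^(s+1)) (2^s) (2^s) (by rw [pow_succ, Nat.mul_two])
        rwa [heq] at hsq
    intro k h0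
    have hk2 : k ≤ 2^k := Nat.le_of_lt (Nat.lt_two_pow_self (n := k))
    have := pa v (2^k) k (2^k - k) (by omega)
    rw [h0, zero_mul] at this
    exact pow2 k this.symm
  -- support of x
  set S : Finset G := (E.symm x).support with hSdef
  have hSne : S.Nonempty := by
    rw [Finset.nonempty_iff_ne_empty]
    intro h
    apply hx
    have h0 : E.symm x = 0 := DFinsupp.support_eq_empty.mp h
    have := congrArg E h0
    rwa [E.apply_symm_apply, map_zero] at this
  have hSπ : ∀ γ ∈ S, πh γ x ≠ 0 := by
    intro γ hγ
    rw [hπ]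
    exact fun h => (DFinsupp.mem_support_iff.mp hγ) (Subtype.ext h)
  -- the ordering
  set H := AddSubgroup.closure ((S : Set G)) with hHdef
  have hSH : ∀ τ ∈ S, τ ∈ H := fun τ h => AddSubgroup.subset_closure h
  haveI : Module.Finite ℤ H := by
    rw [Module.Finite.iff_addGroup_fg]; exact AddGroup.closure_finset_fg S
  haveI : NoZeroSMulDivisors ℤ H :=
    ⟨fun {n h} hnh => by
      by_contra hc; push_neg at hc
      apply hG (h : G) (fun h0 => hc.2 (Subtype.ext h0))
      refine isOfFinAddOrder_iff_zsmul_eq_zero.mpr ⟨n, hc.1, ?_⟩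
      simpa using congrArg Subtype.val hnh⟩
  haveI : Module.Free ℤ H := Module.free_of_finite_type_torsion_free'
  set ι := Module.Free.ChooseBasisIndex ℤ H with hιdef
  set b := Module.Free.chooseBasis ℤ H with hbdef
  set L := Lex (Fin (Fintype.card ι) →₀ ℤ) with hLdef
  set E1 : H ≃+ (Fin (Fintype.card ι) →₀ ℤ) :=
    b.repr.toAddEquiv.trans (Finsupp.domCongr (Fintype.equivFin ι)) with hE1def
  set ψ₀ : H →+ L :=
    { toFun := fun h => toLex (E1 h)
      map_zero' := by simp
      map_add' := by intro a c; simp } with hψ₀def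
  have hψ₀inj : Function.Injective ψ₀ := by
    intro a c h
    exact E1.injective (toLex.injective h)
  -- the key argument, applied to an arbitrary injective functional
  have KEY : ∀ ψ : H →+ L, Function.Injective ψ →
      ∃ (τ : G) (hτ : τ ∈ S), m • τ = σ ∧
        ∀ γ (hγ : γ ∈ S), ψ ⟨γ, hSH γ hγ⟩ ≤ ψ ⟨τ, hSH τ hτ⟩ := by
    intro ψ ψinj
    obtain ⟨Mt, hMt, hMmax⟩ := Finset.exists_max_image S.attach
      (fun t => ψ ⟨t.1, hSH t.1 t.2⟩) (Finset.attach_nonempty_iff.mpr hSne)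
    set M : G := Mt.1 with hMdef
    have hMS : M ∈ S := Mt.2
    set MH : H := ⟨M, hSH M hMS⟩ with hMHdef
    have hmax : ∀ γ (hγ : γ ∈ S), ψ ⟨γ, hSH γ hγ⟩ ≤ ψ MH := by
      intro γ hγ; exact hMmax ⟨γ, hγ⟩ (Finset.mem_attach _ _)
    set cM : J := πh M x with hcMdef
    have hcMmem : cM ∈ 𝒥 M := hπmem M x
    have hcM0 : cM ≠ 0 := hSπ M hMS
    -- invariant
    have INV : ∀ k : ℕ,
        (∀ γ : G, πh γ (apow x k) ≠ 0 →
          ∃ hγ : γ ∈ H, ψ ⟨γ, hγ⟩ ≤ k • ψ MH ∧ (γ ≠ k • M → ψ ⟨γ, hγ⟩ < k • ψ MH)) ∧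
        πh (k • M) (apow x k) = apow cM k := by
      intro k
      induction k with
      | zero =>
        constructor
        · intro γ hγ0
          have hγ0' : γ = 0 := hsingle γ 0 (apow x 0) (by simpa [apow] using hone) hγ0
          subst hγ0'
          refine ⟨zero_mem H, ?_, ?_⟩
          · rw [show ((⟨0, zero_mem H⟩ : H)) = 0 from rfl, map_zero, zero_smul]
          · intro hne; exact absurd (by rw [zero_nsmul]) hne
        · rw [zero_nsmul]
          exact F3' 0 (apow x 0) (by simpa [apow] using hone)
      | succ k IH =>
        obtain ⟨IH1, IH2⟩ := IH
        set w : J := apow x k with hwdef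
        have hx1 : apow x (k+1) = x * w := rfl
        have hterm : ∀ p : G × G, p.1 ∈ S → (πh p.1 x) * (πh p.2 w) ∈ 𝒥 (p.1 + p.2) :=
          fun p _ => hmul p.1 p.2 _ (hπmem p.1 x) _ (hπmem p.2 w)
        constructor
        · intro γ hγ0
          rw [hx1, PROD] at hγ0
          obtain ⟨p, hp, hp0⟩ := Finset.exists_ne_zero_of_sum_ne_zero hγ0
          obtain ⟨hp1, hp2⟩ := Finset.mem_product.mp hp
          have hγeq : γ = p.1 + p.2 :=
            hsingle γ (p.1 + p.2) _ (hterm p hp1) hp0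
          have hπ2ne : πh p.2 w ≠ 0 := by
            intro h
            rw [h, mul_zero, map_zero] at hp0
            exact hp0 rfl
          obtain ⟨hβH, hβle, hβlt⟩ := IH1 p.2 hπ2ne
          have hγH : γ ∈ H := hγeq ▸ add_mem (hSH p.1 hp1) hβH
          have hγsum : (⟨γ, hγH⟩ : H) = ⟨p.1, hSH p.1 hp1⟩ + ⟨p.2, hβH⟩ :=
            Subtype.ext hγeq
          have hαle := hmax p.1 hp1
          have hsucc : (k+1) • ψ MH = ψ MH + k • ψ MH := by
            rw [succ_nsmul, add_comm]
          refine ⟨hγH, ?_, ?_⟩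
          · rw [hγsum, map_add, hsucc]
            exact add_le_add hαle hβle
          · intro hne
            rw [hγsum, map_add, hsucc]
            by_cases hα' : p.1 = M
            · have hβ' : p.2 ≠ k • M := by
                intro h
                apply hne
                rw [hγeq, hα', h, succ_nsmul, add_comm]
              have hα'' : (⟨p.1, hSH p.1 hp1⟩ : H) = MH := Subtype.ext hα'
              rw [hα'']
              exact add_lt_add_right (hβlt hβ') _
            · have : ψ ⟨p.1, hSH p.1 hp1⟩ < ψ MH := by
                refine lt_of_le_of_ne hαle ?_
                intro h
                exact hα' (congrArg Subtype.val (ψinj h))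
              exact add_lt_add_of_lt_of_le this hβle
        · rw [hx1, PROD]
          have hsum := Finset.sum_eq_single (s := (E.symm x).support ×ˢ (E.symm w).support)
            (f := fun p => πh ((k+1) • M) ((πh p.1 x) * (πh p.2 w))) (M, k • M)
            ?_ ?_
          · rw [hsum]
            have hmem2 : πh (k • M) w ∈ 𝒥 (k • M) := hπmem _ _
            have hmm : (πh M x) * (πh (k • M) w) ∈ 𝒥 ((k+1) • M) := by
              have := hmul M (k • M) _ hcMmem _ hmem2
              rwa [show M + k • M = (k+1) • M by rw [succ_nsmul, add_comm]] at this
            rw [F3' _ _ hmm, IH2]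
            rfl
          · intro p hp hpne
            show πh ((k+1) • M) ((πh p.1 x) * (πh p.2 w)) = 0
            by_contra hp0
            obtain ⟨hp1, hp2⟩ := Finset.mem_product.mp hp
            have hγeq : (k+1) • M = p.1 + p.2 :=
              hsingle _ (p.1 + p.2) _ (hterm p hp1) hp0
            have hπ2ne : πh p.2 w ≠ 0 := by
              intro h; rw [h, mul_zero, map_zero] at hp0; exact hp0 rfl
            obtain ⟨hβH, hβle, hβlt⟩ := IH1 p.2 hπ2ne
            have hαle := hmax p.1 hp1
            have hsum2 : ψ ⟨p.1, hSH p.1 hp1⟩ + ψ ⟨p.2, hβH⟩ = ψ MH + k • ψ MH := by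
              rw [← map_nsmul, ← map_add, ← map_add]
              congr 1
              apply Subtype.ext
              show p.1 + p.2 = M + k • M
              rw [← hγeq, succ_nsmul, add_comm]
            have hαeq : ψ ⟨p.1, hSH p.1 hp1⟩ = ψ MH := by
              by_contra hne
              have := add_lt_add_of_lt_of_le (lt_of_le_of_ne hαle hne) hβle
              rw [hsum2] at this
              exact lt_irrefl _ this
            have hβeq : ψ ⟨p.2, hβH⟩ = k • ψ MH := by
              rw [hαeq] at hsum2
              exact add_left_cancel hsum2
            have hp1M : p.1 = M := congrArg Subtype.val (ψinj hαeq)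
            have hp2M : p.2 = k • M := by
              by_contra h
              exact absurd hβeq (ne_of_lt (hβlt h))
            exact hpne (Prod.ext hp1M hp2M)
          · intro hnm
            have : πh (k • M) w = 0 := by
              by_contra h
              apply hnm
              rw [Finset.mem_product]
              exact ⟨hMS, DFinsupp.mem_support_iff.mpr (fun h0 => h (by rw [hπ, h0]; rfl))⟩
            show πh ((k+1) • M) ((πh M x) * (πh (k • M) w)) = 0
            rw [this, mul_zero, map_zero]
      -- end INV
    have hNZ : apow cM m ≠ 0 := NZ M cM hcMmem hcM0 m
    have htop : πh (m • M) (apow x m) ≠ 0 := by rw [(INV m).2]; exact hNZ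
    have hσ : m • M = σ := hsingle _ σ (apow x m) hpow htop
    exact ⟨M, hMS, hσ, hmax⟩
  -- apply with ψ₀ and -ψ₀
  obtain ⟨M, hMS, hMσ, hMmax⟩ := KEY ψ₀ hψ₀inj
  have hneginj : Function.Injective (-ψ₀) := by
    intro a c h
    simp only [AddMonoidHom.neg_apply, neg_inj] at h
    have h' : -(ψ₀ a) = -(ψ₀ c) := h
    exact hψ₀inj (neg_inj.mp h')
  obtain ⟨M', hM'S, hM'σ, hM'max⟩ := KEY (-ψ₀) hneginj
  have hMM' : M = M' := by
    by_contra h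
    have hms : m • (M - M') = 0 := by
      rw [smul_sub, hMσ, hM'σ, sub_self]
    exact hG (M - M') (sub_ne_zero.mpr h)
      (isOfFinAddOrder_iff_nsmul_eq_zero.mpr ⟨m, hm, hms⟩)
  subst hMM'
  have hall : ∀ γ ∈ S, γ = M := by
    intro γ hγ
    have le1 := hMmax γ hγ
    have le2 := hM'max γ hγ
    simp only [AddMonoidHom.neg_apply, neg_le_neg_iff] at le2
    have : ψ₀ ⟨γ, hSH γ hγ⟩ = ψ₀ ⟨M, hSH M hMS⟩ := le_antisymm le1 (by
      have : (⟨M, hSH M hM'S⟩ : H) = ⟨M, hSH M hMS⟩ := rfl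
      rw [← this]; exact le2)
    exact congrArg Subtype.val (hψ₀inj this)
  have hxM : x ∈ 𝒥 M := by
    rw [F4 x]
    apply Submodule.sum_mem
    intro γ hγ
    have := hall γ hγ
    subst this
    exact hπmem γ x
  exact ⟨M, hMσ, hxM⟩
end
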